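/- arXiv:1901.01432 — 3 statements merged into one kernel-verified Lean document; each statement's English description precedes it below -/
import Mathlib

section
/- Let R > 0, let v ∈ ℝ² with ‖v‖ = q > 0, and let U be uniformly distributed on the closed disc of radius R centered at v. Define f : (0,∞) → ℝ by f(g) = (2g/(πR²))·arccos((g² + q² − R²)/(2gq)) for |R − q| < g < R + q, f(g) = 2g/R² for 0 < g < R − q (this case is vacuous when q ≥ R), and f(g) = 0 otherwise. Then for every t ≥ 0, P(‖U‖ ≤ t) = ∫₀ᵗ f(g) dg; i.e., f is the density of the distance ‖U‖ from the origin. -/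
open MeasureTheory

/-- The density of the distance from the origin to a point uniformly distributed in a disc of
radius `R` whose center is at distance `q` from the origin (eq. (25) of the paper). -/
noncomputable def maternDistanceDensity (R q : ℝ) (g : ℝ) : ℝ :=
  if |R - q| < g ∧ g < R + q then
    (2 * g / (Real.pi * R ^ 2)) * Real.arccos ((g ^ 2 + q ^ 2 - R ^ 2) / (2 * g * q))
  else if 0 < g ∧ g < R - q then 2 * g / R ^ 2
  else 0


open Real Set

lemma volume_cos_superlevel (c : ℝ) :
    volume (Set.Ioo (-π) π ∩ {θ | c ≤ Real.cos θ}) = ENNReal.ofReal (2 * Real.arccos c) := by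
  rcases le_or_gt 1 c with hc | hc
  · have h0 : Set.Ioo (-π) π ∩ {θ | c ≤ Real.cos θ} ⊆ ({0} : Set ℝ) := by
      rintro θ ⟨⟨h1, h2⟩, hcos⟩
      have hθ1 : Real.cos θ = 1 := le_antisymm (Real.cos_le_one θ) (le_trans hc hcos)
      have := Real.cos_eq_one_iff_of_lt_of_lt (by linarith : -(2*π) < θ) (by linarith [Real.pi_pos] : θ < 2*π) |>.mp hθ1
      simpa using this
    have : volume (Set.Ioo (-π) π ∩ {θ | c ≤ Real.cos θ}) = 0 :=
      measure_mono_null h0 (measure_singleton 0)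
    rw [this, Real.arccos_eq_zero.mpr hc, mul_zero, ENNReal.ofReal_zero]
  · set A := Real.arccos c with hA
    have hA0 : 0 < A := Real.arccos_pos.mpr hc
    have hAπ : A ≤ π := Real.arccos_le_pi c
    have hsub1 : Set.Ioo (-A) A ⊆ Set.Ioo (-π) π ∩ {θ | c ≤ Real.cos θ} := by
      rintro θ ⟨h1, h2⟩
      refine ⟨⟨by linarith, by linarith⟩, ?_⟩
      have habs : |θ| ≤ A := abs_le.mpr ⟨h1.le, h2.le⟩
      have h3 : Real.cos A ≤ Real.cos θ := by
        rw [← Real.cos_abs θ]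
        exact Real.cos_le_cos_of_nonneg_of_le_pi (abs_nonneg θ) hAπ habs
      rcases le_or_gt (-1) c with h4 | h4
      · have : Real.cos A = c := Real.cos_arccos h4 hc.le
        simpa [this] using h3
      · exact le_trans h4.le (le_trans (Real.neg_one_le_cos A) h3)
    have hsub2 : Set.Ioo (-π) π ∩ {θ | c ≤ Real.cos θ} ⊆ Set.Icc (-A) A := by
      rintro θ ⟨⟨h1, h2⟩, hcos⟩
      rw [Set.mem_Icc, ← abs_le]
      by_contra hgt
      push_neg at hgt
      have habsπ : |θ| < π := abs_lt.mpr ⟨h1, h2⟩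
      have h5 : Real.cos |θ| < Real.cos A :=
        Real.strictAntiOn_cos ⟨hA0.le, hAπ⟩ ⟨by positivity, habsπ.le⟩ hgt
      rcases le_or_gt (-1) c with h4 | h4
      · have h6 : Real.cos A = c := Real.cos_arccos h4 hc.le
        rw [Real.cos_abs] at h5
        rw [h6] at h5
        exact absurd hcos (not_le.mpr h5)
      · have : A = π := Real.arccos_eq_pi.mpr h4.le
        rw [this] at hgt; linarith
    have h1 : ENNReal.ofReal (2 * A) ≤ volume (Set.Ioo (-π) π ∩ {θ | c ≤ Real.cos θ}) := by
      calc ENNReal.ofReal (2 * A) = volume (Set.Ioo (-A) A) := by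
            rw [Real.volume_Ioo]; congr 1; ring
        _ ≤ _ := measure_mono hsub1
    have h2 : volume (Set.Ioo (-π) π ∩ {θ | c ≤ Real.cos θ}) ≤ ENNReal.ofReal (2 * A) := by
      calc _ ≤ volume (Set.Icc (-A) A) := measure_mono hsub2
        _ = ENNReal.ofReal (2 * A) := by rw [Real.volume_Icc]; congr 1; ring
    exact le_antisymm h2 h1

lemma volume_inter_closedBall_complex (R q t : ℝ) (hR : 0 < R) (hq0 : 0 < q) (ht : 0 ≤ t) :
    volume (Metric.closedBall (0:ℂ) t ∩ Metric.closedBall (q:ℂ) R) =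
      ENNReal.ofReal (∫ g in Set.Ioc (0:ℝ) t,
        2 * g * Real.arccos ((g ^ 2 + q ^ 2 - R ^ 2) / (2 * g * q))) := by
  set S : Set ℂ := Metric.closedBall (0:ℂ) t ∩ Metric.closedBall (q:ℂ) R with hS
  have hSm : MeasurableSet S := measurableSet_closedBall.inter measurableSet_closedBall
  have hSfin : volume S ≠ ⊤ :=
    ((measure_mono Set.inter_subset_left).trans_lt measure_closedBall_lt_top).ne
  -- the big set in polar coordinates
  set E : Set (ℝ × ℝ) :=
    {p | p.1 ≤ t ∧ p.1 ^ 2 + q ^ 2 - 2 * p.1 * q * Real.cos p.2 ≤ R ^ 2} with hE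
  have hEclosed : IsClosed E := by
    have h1 : IsClosed {p : ℝ × ℝ | p.1 ≤ t} := isClosed_le continuous_fst continuous_const
    have h2 : IsClosed {p : ℝ × ℝ | p.1 ^ 2 + q ^ 2 - 2 * p.1 * q * Real.cos p.2 ≤ R ^ 2} :=
      isClosed_le (by fun_prop) continuous_const
    exact h1.inter h2
  set K : ℝ × ℝ → ℝ := fun p => p.1 * E.indicator (fun _ => (1:ℝ)) p with hK
  have hKmeas : Measurable K :=
    measurable_fst.mul (measurable_const.indicator hEclosed.measurableSet)
  -- membership translation
  have hmem : ∀ p ∈ polarCoord.target, (Complex.polarCoord.symm p ∈ S ↔ p ∈ E) := by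
    rintro ⟨g, θ⟩ hp
    rw [polarCoord_target] at hp
    obtain ⟨hg, hθ⟩ := hp
    simp only [Set.mem_Ioi] at hg
    have h1 : ‖Complex.polarCoord.symm (g, θ)‖ = g := by
      rw [Complex.norm_polarCoord_symm]; exact abs_of_pos hg
    constructor
    · rintro ⟨hz1, hz2⟩
      refine ⟨?_, ?_⟩
      · rw [Metric.mem_closedBall, Complex.dist_eq, sub_zero, h1] at hz1; exact hz1
      · rw [Metric.mem_closedBall, Complex.dist_eq] at hz2
        have h2 : Complex.normSq (Complex.polarCoord.symm (g, θ) - (q:ℂ)) ≤ R ^ 2 := by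
          calc Complex.normSq (Complex.polarCoord.symm (g, θ) - (q:ℂ))
              = ‖Complex.polarCoord.symm (g, θ) - (q:ℂ)‖ ^ 2 := by
                rw [Complex.sq_norm]
            _ ≤ R ^ 2 := by nlinarith [norm_nonneg (Complex.polarCoord.symm (g, θ) - (q:ℂ))]
        rw [Complex.polarCoord_symm_apply] at h2
        simp only [Complex.normSq_apply, Complex.add_re, Complex.add_im, Complex.sub_re,
          Complex.sub_im, Complex.mul_re, Complex.mul_im, Complex.ofReal_re, Complex.ofReal_im,
          Complex.I_re, Complex.I_im] at h2
        nlinarith [Real.sin_sq_add_cos_sq θ]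
    · rintro ⟨h2, h3⟩
      constructor
      · rw [Metric.mem_closedBall, Complex.dist_eq, sub_zero, h1]; exact h2
      · rw [Metric.mem_closedBall, Complex.dist_eq]
        have h4 : Complex.normSq (Complex.polarCoord.symm (g, θ) - (q:ℂ)) ≤ R ^ 2 := by
          rw [Complex.polarCoord_symm_apply]
          simp only [Complex.normSq_apply, Complex.add_re, Complex.add_im, Complex.sub_re,
            Complex.sub_im, Complex.mul_re, Complex.mul_im, Complex.ofReal_re, Complex.ofReal_im,
            Complex.I_re, Complex.I_im]
          nlinarith [Real.sin_sq_add_cos_sq θ]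
        have h5 : ‖Complex.polarCoord.symm (g, θ) - (q:ℂ)‖ ^ 2 ≤ R ^ 2 := by
          rw [Complex.sq_norm]; exact h4
        nlinarith [norm_nonneg (Complex.polarCoord.symm (g, θ) - (q:ℂ))]
  -- step: volume S = ofReal ∫ indicator
  have step1 : volume S = ENNReal.ofReal (∫ z : ℂ, S.indicator (fun _ => (1:ℝ)) z) := by
    have h1 : ∫ z : ℂ, S.indicator (fun _ => (1:ℝ)) z = (volume S).toReal :=
      integral_indicator_one hSm
    rw [h1, ENNReal.ofReal_toReal hSfin]
  rw [step1, ← Complex.integral_comp_polarCoord_symm (S.indicator (fun _ => (1:ℝ)))]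
  -- replace the integrand by K on the target
  have step2 : ∫ p in polarCoord.target, p.1 • S.indicator (fun _ => (1:ℝ))
      (Complex.polarCoord.symm p) = ∫ p in polarCoord.target, K p := by
    apply setIntegral_congr_fun polarCoord.open_target.measurableSet
    intro p hp
    simp only [smul_eq_mul, hK]
    congr 1
    by_cases h : p ∈ E
    · rw [Set.indicator_of_mem ((hmem p hp).mpr h), Set.indicator_of_mem h]
    · rw [Set.indicator_of_notMem (fun hx => h ((hmem p hp).mp hx)),
        Set.indicator_of_notMem h]
  rw [step2]
  -- shrink the domain
  have hsub : Set.Ioc (0:ℝ) t ×ˢ Set.Ioo (-π) π ⊆ polarCoord.target := by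
    rw [polarCoord_target]
    exact Set.prod_mono Set.Ioc_subset_Ioi_self subset_rfl
  have step3 : ∫ p in polarCoord.target, K p
      = ∫ p in Set.Ioc (0:ℝ) t ×ˢ Set.Ioo (-π) π, K p := by
    have : ∀ p ∈ polarCoord.target, K p =
        (Set.Ioc (0:ℝ) t ×ˢ Set.Ioo (-π) π).indicator K p := by
      rintro ⟨g, θ⟩ hp
      rw [polarCoord_target] at hp
      by_cases hmem2 : ((g, θ) : ℝ × ℝ) ∈ Set.Ioc (0:ℝ) t ×ˢ Set.Ioo (-π) π
      · rw [Set.indicator_of_mem hmem2]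
      · rw [Set.indicator_of_notMem hmem2]
        have hgt : t < g := by
          rw [Set.mem_prod, not_and_or] at hmem2
          rcases hmem2 with h | h
          · rw [Set.mem_Ioc, not_and_or] at h
            rcases h with h' | h'
            · exact absurd hp.1 h'
            · exact not_le.mp h'
          · exact absurd hp.2 h
        have : ((g, θ) : ℝ × ℝ) ∉ E := by
          intro hEmem
          exact absurd hEmem.1 (not_le.mpr hgt)
        simp [hK, Set.indicator_of_notMem this]
    rw [setIntegral_congr_fun polarCoord.open_target.measurableSet this,
      setIntegral_indicator ((measurableSet_Ioc).prod measurableSet_Ioo),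
      Set.inter_eq_self_of_subset_right hsub]
  rw [step3]
  -- Fubini
  have hprodfin : (volume : Measure (ℝ × ℝ)) (Set.Ioc (0:ℝ) t ×ˢ Set.Ioo (-π) π) ≠ ⊤ := by
    rw [Measure.volume_eq_prod, Measure.prod_prod]
    exact ENNReal.mul_ne_top (by simp) (by simp)
  have hKint : IntegrableOn K (Set.Ioc (0:ℝ) t ×ˢ Set.Ioo (-π) π) volume := by
    apply Measure.integrableOn_of_bounded hprodfin hKmeas.aestronglyMeasurable (M := t)
    rw [ae_restrict_iff' ((measurableSet_Ioc).prod measurableSet_Ioo)]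
    filter_upwards with p hp
    obtain ⟨hp1, _⟩ := hp
    have h1 : |K p| ≤ |p.1| := by
      rw [hK, abs_mul]
      have : |E.indicator (fun _ => (1:ℝ)) p| ≤ 1 := by
        simp only [Set.indicator_apply]; split <;> simp
      nlinarith [abs_nonneg p.1]
    have : |p.1| ≤ t := by
      rw [abs_of_pos hp1.1]; exact hp1.2
    calc ‖K p‖ = |K p| := rfl
      _ ≤ t := le_trans h1 this
  have step4 : ∫ p in Set.Ioc (0:ℝ) t ×ˢ Set.Ioo (-π) π, K p
      = ∫ g in Set.Ioc (0:ℝ) t, ∫ θ in Set.Ioo (-π) π, K (g, θ) := by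
    rw [Measure.volume_eq_prod] at hKint ⊢
    exact setIntegral_prod K hKint
  rw [step4]
  congr 1
  -- inner integral
  apply setIntegral_congr_fun measurableSet_Ioc
  intro g hg
  obtain ⟨hg0, hgt⟩ := hg
  have hT : ∀ θ : ℝ, E.indicator (fun _ => (1:ℝ)) (g, θ)
      = ({θ | (g ^ 2 + q ^ 2 - R ^ 2) / (2 * g * q) ≤ Real.cos θ}).indicator
          (fun _ => (1:ℝ)) θ := by
    intro θ
    have hiff : ((g, θ) : ℝ × ℝ) ∈ E ↔
        θ ∈ {θ | (g ^ 2 + q ^ 2 - R ^ 2) / (2 * g * q) ≤ Real.cos θ} := by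
      constructor
      · rintro ⟨_, h2⟩
        rw [Set.mem_setOf_eq, div_le_iff₀ (by positivity)]
        nlinarith
      · intro h
        rw [Set.mem_setOf_eq, div_le_iff₀ (by positivity)] at h
        exact ⟨hgt, by nlinarith⟩
    by_cases h : ((g, θ) : ℝ × ℝ) ∈ E
    · rw [Set.indicator_of_mem h, Set.indicator_of_mem (hiff.mp h)]
    · rw [Set.indicator_of_notMem h, Set.indicator_of_notMem (fun hx => h (hiff.mpr hx))]
  have : ∀ θ : ℝ, K (g, θ) = g * ({θ | (g ^ 2 + q ^ 2 - R ^ 2) / (2 * g * q) ≤ Real.cos θ}).indicator (fun _ => (1:ℝ)) θ := by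
    intro θ; rw [hK]; simp only; rw [hT θ]
  simp_rw [this]
  rw [integral_const_mul]
  have hTclosed : IsClosed {θ | (g ^ 2 + q ^ 2 - R ^ 2) / (2 * g * q) ≤ Real.cos θ} :=
    isClosed_le continuous_const Real.continuous_cos
  rw [setIntegral_indicator hTclosed.measurableSet]
  simp only [integral_const, smul_eq_mul, mul_one]
  rw [measureReal_def, Measure.restrict_apply_univ, volume_cos_superlevel,
    ENNReal.toReal_ofReal (mul_nonneg (by norm_num) (Real.arccos_nonneg _))]
  ring

/-- Let `R > 0`, let `v ∈ ℝ²` with `‖v‖ = q > 0`, and let `U` be uniformly distributed on the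
closed disc of radius `R` centered at `v`. Then for every `t ≥ 0`,
`P(‖U‖ ≤ t) = ∫₀ᵗ f(g) dg` where `f = maternDistanceDensity R q`; i.e., `f` is the density of
the distance `‖U‖` from the origin. -/
theorem uniform_disc_offset_norm_cdf (R : ℝ) (hR : 0 < R)
    (v : EuclideanSpace ℝ (Fin 2)) (q : ℝ) (hq : ‖v‖ = q) (hq0 : 0 < q)
    (t : ℝ) (ht : 0 ≤ t) :
    ((volume (Metric.closedBall v R))⁻¹ • volume.restrict (Metric.closedBall v R))
      {x : EuclideanSpace ℝ (Fin 2) | ‖x‖ ≤ t}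
      = ENNReal.ofReal (∫ g in (0:ℝ)..t, maternDistanceDensity R q g) := by
  have hπ : (0:ℝ) < π := Real.pi_pos
  have hAm : MeasurableSet {x : EuclideanSpace ℝ (Fin 2) | ‖x‖ ≤ t} :=
    (isClosed_le continuous_norm continuous_const).measurableSet
  rw [Measure.smul_apply, Measure.restrict_apply hAm, smul_eq_mul]
  -- volume of the ball
  have hB : volume (Metric.closedBall v R) = ENNReal.ofReal (π * R ^ 2) := by
    rw [EuclideanSpace.volume_closedBall, Fintype.card_fin]
    have h1 : ((2:ℕ) : ℝ) / 2 + 1 = 2 := by norm_num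
    rw [h1, Real.Gamma_two, Real.sq_sqrt Real.pi_nonneg, div_one,
      ← ENNReal.ofReal_pow hR.le, ← ENNReal.ofReal_mul (by positivity)]
    congr 1
    ring
  -- transfer to ℂ
  set b := Complex.orthonormalBasisOneI with hb
  set A := {x : EuclideanSpace ℝ (Fin 2) | ‖x‖ ≤ t} ∩ Metric.closedBall v R with hA
  have hAm2 : MeasurableSet A := hAm.inter measurableSet_closedBall
  set w : ℂ := b.repr.symm v with hwdef
  have hwn : ‖w‖ = q := by rw [← hq, hwdef]; exact b.repr.symm.norm_map v
  have hpre1 : (⇑b.repr) ⁻¹' A = {z : ℂ | ‖z‖ ≤ t} ∩ Metric.closedBall w R := by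
    ext z
    simp only [Set.mem_preimage, hA, Set.mem_inter_iff, Set.mem_setOf_eq, Metric.mem_closedBall]
    rw [b.repr.norm_map z]
    have : dist (b.repr z) v = dist z w := by
      conv_lhs => rw [show v = b.repr w by rw [hwdef]; exact (b.repr.apply_symm_apply v).symm]
      exact b.repr.dist_map z w
    rw [this]
  have htrans1 : volume A = volume ({z : ℂ | ‖z‖ ≤ t} ∩ Metric.closedBall w R) := by
    rw [← hpre1]
    exact ((b.measurePreserving_repr).measure_preimage hAm2.nullMeasurableSet).symm
  -- rotation
  have hwq : ‖w / (q:ℂ)‖ = 1 := by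
    rw [norm_div, Complex.norm_real, Real.norm_eq_abs, abs_of_pos hq0, hwn, div_self hq0.ne']
  set u : Circle := ⟨w / q, mem_sphere_zero_iff_norm.mpr hwq⟩ with hu
  have hq0' : (q:ℂ) ≠ 0 := by exact_mod_cast hq0.ne'
  have habs : ∀ z : ℂ, ‖w / (q:ℂ) * z - w‖ = ‖z - (q:ℂ)‖ := by
    intro z
    have h3 : w / (q:ℂ) * z - w = (w / (q:ℂ)) * (z - (q:ℂ)) := by
      field_simp
    rw [h3, norm_mul, hwq, one_mul]
  have hnorm : ∀ z : ℂ, ‖w / (q:ℂ) * z‖ = ‖z‖ := by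
    intro z
    rw [norm_mul, hwq, one_mul]
  have hpre2 : (⇑(rotation u)) ⁻¹' ({z : ℂ | ‖z‖ ≤ t} ∩ Metric.closedBall w R)
      = Metric.closedBall (0:ℂ) t ∩ Metric.closedBall (q:ℂ) R := by
    ext z
    simp only [Set.mem_preimage, Set.mem_inter_iff, Set.mem_setOf_eq, Metric.mem_closedBall,
      rotation_apply]
    rw [Complex.dist_eq (w / (q:ℂ) * z) w, habs z, hnorm z,
      Complex.dist_eq z 0, sub_zero, Complex.dist_eq z (q:ℂ)]
  have htrans2 : volume ({z : ℂ | ‖z‖ ≤ t} ∩ Metric.closedBall w R)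
      = volume (Metric.closedBall (0:ℂ) t ∩ Metric.closedBall (q:ℂ) R) := by
    rw [← hpre2]
    exact (((rotation u).measurePreserving).measure_preimage
      (((isClosed_le continuous_norm continuous_const).measurableSet.inter
        measurableSet_closedBall).nullMeasurableSet)).symm
  rw [htrans1, htrans2, volume_inter_closedBall_complex R q t hR hq0 ht, hB]
  -- final arithmetic
  have hint : ∫ g in (0:ℝ)..t, maternDistanceDensity R q g
      = (π * R ^ 2)⁻¹ * ∫ g in Set.Ioc (0:ℝ) t,
          2 * g * Real.arccos ((g ^ 2 + q ^ 2 - R ^ 2) / (2 * g * q)) := by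
    rw [intervalIntegral.integral_of_le ht, ← integral_const_mul]
    apply setIntegral_congr_ae measurableSet_Ioc
    have hae : ∀ᵐ x : ℝ, x ∉ ({|R - q|, R + q} : Set ℝ) :=
      (Set.Finite.insert _ (Set.finite_singleton _)).countable.ae_notMem _
    filter_upwards [hae] with x hx hxI
    have hx1 : x ≠ |R - q| := fun h => hx (by simp [h])
    have hx2 : x ≠ R + q := fun h => hx (by simp [h])
    have hx0 : 0 < x := hxI.1
    unfold maternDistanceDensity
    split_ifs with h1 h2
    · ring
    · -- 0 < x < R - q : arccos = π
      have hxRq : x < R - q := h2.2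
      have hc : (x ^ 2 + q ^ 2 - R ^ 2) / (2 * x * q) ≤ -1 := by
        rw [div_le_iff₀ (by positivity)]
        nlinarith
      rw [Real.arccos_eq_pi.mpr hc]
      field_simp
    · -- outside : arccos = 0
      have hc : 1 ≤ (x ^ 2 + q ^ 2 - R ^ 2) / (2 * x * q) := by
        rw [le_div_iff₀ (by positivity)]
        rcases not_and_or.mp h1 with h | h
        · -- ¬ |R - q| < x, so x < |R-q| (x ≠ |R-q|)
          have hlt : x < |R - q| := lt_of_le_of_ne (not_lt.mp h) hx1
          rcases le_or_gt R q with hRq | hRq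
          · rw [abs_of_nonpos (by linarith)] at hlt
            nlinarith
          · rw [abs_of_pos (by linarith)] at hlt
            exact absurd ⟨hx0, hlt⟩ h2
        · have hgt : R + q < x := lt_of_le_of_ne (not_lt.mp h) (Ne.symm hx2)
          nlinarith
      rw [Real.arccos_eq_zero.mpr hc]
      ring
  rw [hint, ENNReal.ofReal_mul (show (0:ℝ) ≤ (π * R ^ 2)⁻¹ by positivity),
    ENNReal.ofReal_inv_of_pos (show (0:ℝ) < π * R ^ 2 by positivity),
    ENNReal.ofReal_mul Real.pi_nonneg]
end

section
/- For all real numbers q > R > 0, ∫_{q−R}^{q+R} (2g/(πR²))·arccos((g² + q² − R²)/(2gq)) dg = 1. -/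
open Real intervalIntegral Set

/-- For all real numbers `q > R > 0`,
`∫_{q−R}^{q+R} (2g/(πR²))·arccos((g² + q² − R²)/(2gq)) dg = 1`. -/
theorem matern_offset_density_normalization (R q : ℝ) (hR : 0 < R) (hqR : R < q) :
    ∫ g in (q - R)..(q + R),
        (2 * g / (Real.pi * R ^ 2)) * Real.arccos ((g ^ 2 + q ^ 2 - R ^ 2) / (2 * g * q))
      = 1 := by
  have hq : 0 < q := hR.trans hqR
  have ha : 0 < q - R := by linarith
  have hab : q - R ≤ q + R := by linarith
  have hpi : (0:ℝ) < Real.pi := Real.pi_pos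
  set F : ℝ → ℝ := fun g =>
      (g ^ 2 * Real.arccos ((g ^ 2 + q ^ 2 - R ^ 2) / (2 * g * q))
        + R ^ 2 * Real.arccos ((q ^ 2 + R ^ 2 - g ^ 2) / (2 * q * R))
        - Real.sqrt ((R ^ 2 - (g - q) ^ 2) * ((g + q) ^ 2 - R ^ 2)) / 2)
      / (Real.pi * R ^ 2) with hF
  -- continuity of the integrand on the closed interval
  have hcontf : ContinuousOn (fun g =>
      (2 * g / (Real.pi * R ^ 2)) * Real.arccos ((g ^ 2 + q ^ 2 - R ^ 2) / (2 * g * q)))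
      (Icc (q - R) (q + R)) := by
    apply ContinuousOn.mul (by fun_prop)
    apply Real.continuous_arccos.comp_continuousOn
    apply ContinuousOn.div (by fun_prop) (by fun_prop)
    intro x hx
    have : 0 < x := lt_of_lt_of_le ha hx.1
    positivity
  have hcontF : ContinuousOn F (Icc (q - R) (q + R)) := by
    apply ContinuousOn.div _ continuousOn_const (fun x _ => by positivity)
    apply ContinuousOn.sub
    apply ContinuousOn.add
    · apply ContinuousOn.mul (by fun_prop)
      apply Real.continuous_arccos.comp_continuousOn
      apply ContinuousOn.div (by fun_prop) (by fun_prop)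
      intro x hx
      have : 0 < x := lt_of_lt_of_le ha hx.1
      positivity
    · have hcv : Continuous fun g : ℝ => (q ^ 2 + R ^ 2 - g ^ 2) / (2 * q * R) := by fun_prop
      exact (continuous_const.mul (Real.continuous_arccos.comp hcv)).continuousOn
    · fun_prop
  have hderiv : ∀ g ∈ Ioo (q - R) (q + R), HasDerivAt F
      ((2 * g / (Real.pi * R ^ 2)) * Real.arccos ((g ^ 2 + q ^ 2 - R ^ 2) / (2 * g * q))) g := by
    intro g hg
    obtain ⟨hg1, hg2⟩ := hg
    have hgpos : 0 < g := ha.trans hg1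
    have hden : (0:ℝ) < 2 * g * q := by positivity
    -- the two arccos arguments are in (-1, 1)
    have hu1 : (g ^ 2 + q ^ 2 - R ^ 2) / (2 * g * q) ≠ -1 :=
      (show (-1:ℝ) < _ from (lt_div_iff₀ hden).mpr (by nlinarith)).ne'
    have hu2 : (g ^ 2 + q ^ 2 - R ^ 2) / (2 * g * q) ≠ 1 :=
      ((div_lt_one hden).mpr (by nlinarith)).ne
    have hden2 : (0:ℝ) < 2 * q * R := by positivity
    have hv1 : (q ^ 2 + R ^ 2 - g ^ 2) / (2 * q * R) ≠ -1 :=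
      (show (-1:ℝ) < _ from (lt_div_iff₀ hden2).mpr (by nlinarith)).ne'
    have hv2 : (q ^ 2 + R ^ 2 - g ^ 2) / (2 * q * R) ≠ 1 :=
      ((div_lt_one hden2).mpr (by nlinarith)).ne
    -- the discriminant is positive
    have hΔ : 0 < (R ^ 2 - (g - q) ^ 2) * ((g + q) ^ 2 - R ^ 2) := by
      apply mul_pos <;> nlinarith
    set s := Real.sqrt ((R ^ 2 - (g - q) ^ 2) * ((g + q) ^ 2 - R ^ 2)) with hsdef
    have hs : 0 < s := Real.sqrt_pos.mpr hΔ
    have hs2 : s ^ 2 = (R ^ 2 - (g - q) ^ 2) * ((g + q) ^ 2 - R ^ 2) := Real.sq_sqrt hΔ.le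
    -- relate the sqrts in the arccos derivatives to s
    have h1 : Real.sqrt (1 - ((g ^ 2 + q ^ 2 - R ^ 2) / (2 * g * q)) ^ 2) = s / (2 * g * q) := by
      have : 1 - ((g ^ 2 + q ^ 2 - R ^ 2) / (2 * g * q)) ^ 2 = (s / (2 * g * q)) ^ 2 := by
        rw [div_pow, div_pow, hs2]
        field_simp
        ring
      rw [this, Real.sqrt_sq (by positivity)]
    have h2 : Real.sqrt (1 - ((q ^ 2 + R ^ 2 - g ^ 2) / (2 * q * R)) ^ 2) = s / (2 * q * R) := by
      have : 1 - ((q ^ 2 + R ^ 2 - g ^ 2) / (2 * q * R)) ^ 2 = (s / (2 * q * R)) ^ 2 := by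
        rw [div_pow, div_pow, hs2]
        field_simp
        ring
      rw [this, Real.sqrt_sq (by positivity)]
    -- derivatives of the pieces
    have hnum : HasDerivAt (fun g : ℝ => g ^ 2 + q ^ 2 - R ^ 2) (2 * g) g := by
      simpa using ((hasDerivAt_pow 2 g).add_const (q ^ 2)).sub_const (R ^ 2)
    have hdeng : HasDerivAt (fun g : ℝ => 2 * g * q) (2 * q) g := by
      simpa using ((hasDerivAt_id g).const_mul 2).mul_const q
    have hu : HasDerivAt (fun g : ℝ => (g ^ 2 + q ^ 2 - R ^ 2) / (2 * g * q))
        ((2 * g * (2 * g * q) - (g ^ 2 + q ^ 2 - R ^ 2) * (2 * q)) / (2 * g * q) ^ 2) g :=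
      hnum.div hdeng hden.ne'
    have hu' : HasDerivAt (fun g : ℝ => Real.arccos ((g ^ 2 + q ^ 2 - R ^ 2) / (2 * g * q)))
        (-(1 / (s / (2 * g * q))) *
          ((2 * g * (2 * g * q) - (g ^ 2 + q ^ 2 - R ^ 2) * (2 * q)) / (2 * g * q) ^ 2)) g := by
      have := (Real.hasDerivAt_arccos hu1 hu2).comp g hu
      rwa [h1] at this
    have hA : HasDerivAt (fun g : ℝ =>
        g ^ 2 * Real.arccos ((g ^ 2 + q ^ 2 - R ^ 2) / (2 * g * q)))
        (2 * g * Real.arccos ((g ^ 2 + q ^ 2 - R ^ 2) / (2 * g * q))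
          + g ^ 2 * (-(1 / (s / (2 * g * q))) *
            ((2 * g * (2 * g * q) - (g ^ 2 + q ^ 2 - R ^ 2) * (2 * q)) / (2 * g * q) ^ 2))) g := by
      have := (hasDerivAt_pow 2 g).mul hu'
      exact this.congr_deriv (by norm_num)
    have hnum2 : HasDerivAt (fun g : ℝ => q ^ 2 + R ^ 2 - g ^ 2) (-(2 * g)) g := by
      simpa using (hasDerivAt_pow 2 g).const_sub (q ^ 2 + R ^ 2)
    have hv : HasDerivAt (fun g : ℝ => (q ^ 2 + R ^ 2 - g ^ 2) / (2 * q * R))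
        (-(2 * g) / (2 * q * R)) g := hnum2.div_const _
    have hB : HasDerivAt (fun g : ℝ =>
        R ^ 2 * Real.arccos ((q ^ 2 + R ^ 2 - g ^ 2) / (2 * q * R)))
        (R ^ 2 * (-(1 / (s / (2 * q * R))) * (-(2 * g) / (2 * q * R)))) g := by
      have := ((Real.hasDerivAt_arccos hv1 hv2).comp g hv).const_mul (R ^ 2)
      rwa [h2] at this
    have hp1 : HasDerivAt (fun g : ℝ => R ^ 2 - (g - q) ^ 2) (-(2 * (g - q))) g := by
      have : HasDerivAt (fun g : ℝ => (g - q) ^ 2) (2 * (g - q)) g := by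
        exact (((hasDerivAt_id g).sub_const q).pow 2).congr_deriv (by simp)
      simpa using this.const_sub (R ^ 2)
    have hp2 : HasDerivAt (fun g : ℝ => (g + q) ^ 2 - R ^ 2) (2 * (g + q)) g := by
      have : HasDerivAt (fun g : ℝ => (g + q) ^ 2) (2 * (g + q)) g := by
        exact (((hasDerivAt_id g).add_const q).pow 2).congr_deriv (by simp)
      simpa using this.sub_const (R ^ 2)
    have hC : HasDerivAt (fun g : ℝ =>
        Real.sqrt ((R ^ 2 - (g - q) ^ 2) * ((g + q) ^ 2 - R ^ 2)) / 2)
        (((-(2 * (g - q)) * ((g + q) ^ 2 - R ^ 2) + (R ^ 2 - (g - q) ^ 2) * (2 * (g + q)))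
          / (2 * s)) / 2) g := by
      exact ((hp1.mul hp2).sqrt hΔ.ne').div_const 2
    have hFd := ((hA.add hB).sub hC).div_const (Real.pi * R ^ 2)
    have hgne : g ≠ 0 := hgpos.ne'
    have hqne : q ≠ 0 := hq.ne'
    have hRne : R ≠ 0 := hR.ne'
    have hsne : s ≠ 0 := hs.ne'
    refine hFd.congr_deriv ?_
    field_simp
    ring
  have hint : IntervalIntegrable (fun g =>
      (2 * g / (Real.pi * R ^ 2)) * Real.arccos ((g ^ 2 + q ^ 2 - R ^ 2) / (2 * g * q)))
      MeasureTheory.volume (q - R) (q + R) := by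
    apply hcontf.intervalIntegrable_of_Icc hab
  rw [intervalIntegral.integral_eq_sub_of_hasDerivAt_of_le hab hcontF hderiv hint]
  -- evaluate F at the endpoints
  have hFb : F (q + R) = 1 := by
    have e1 : ((q + R) ^ 2 + q ^ 2 - R ^ 2) / (2 * (q + R) * q) = 1 := by
      rw [div_eq_one_iff_eq (by positivity)]; ring
    have e2 : (q ^ 2 + R ^ 2 - (q + R) ^ 2) / (2 * q * R) = -1 := by
      rw [div_eq_iff (by positivity)]; ring
    have e3 : (R ^ 2 - ((q + R) - q) ^ 2) * (((q + R) + q) ^ 2 - R ^ 2) = 0 := by ring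
    simp only [hF, e1, e2, e3, Real.arccos_one, Real.arccos_neg_one, Real.sqrt_zero]
    field_simp
    ring
  have hFa : F (q - R) = 0 := by
    have e1 : ((q - R) ^ 2 + q ^ 2 - R ^ 2) / (2 * (q - R) * q) = 1 := by
      rw [div_eq_one_iff_eq (by positivity)]; ring
    have e2 : (q ^ 2 + R ^ 2 - (q - R) ^ 2) / (2 * q * R) = 1 := by
      rw [div_eq_one_iff_eq (by positivity)]; ring
    have e3 : (R ^ 2 - ((q - R) - q) ^ 2) * (((q - R) + q) ^ 2 - R ^ 2) = 0 := by ring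
    simp [hF, e1, e2, e3]
  rw [hFb, hFa]
  ring
end

section
/- Let α > 2, let N be a positive integer, let A > 0, and let s̃ satisfy 0 < s̃ < A^α. Then ∫_A^∞ (1 − (1 + s̃·y^{−α})^{−N})·y dy = (A²/2)·( ₂F₁(−2/α, N; 1 − 2/α; −s̃·A^{−α}) − 1 ), where for |z| < 1 the Gauss hypergeometric function is given by its series ₂F₁(a, b; c; z) = Σ_{k=0}^∞ ((a)_k (b)_k / (c)_k) · z^k / k!, with (x)_k = x(x+1)⋯(x+k−1) the rising Pochhammer symbol. -/
set_option maxHeartbeats 1600000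


open MeasureTheory

/-- The Gauss hypergeometric function `₂F₁(a, b; c; z)` defined by its power series
`Σ_{k=0}^∞ ((a)_k (b)_k / (c)_k) · z^k / k!`, where `(x)_k` is the rising Pochhammer symbol. -/
noncomputable def gaussHyper (a b c z : ℝ) : ℝ :=
  ∑' k : ℕ,
    ((ascPochhammer ℝ k).eval a * (ascPochhammer ℝ k).eval b / (ascPochhammer ℝ k).eval c) *
      z ^ k / (Nat.factorial k)

lemma poch_shift (a : ℝ) (k : ℕ) :
    (ascPochhammer ℝ k).eval a * (a + k) = a * (ascPochhammer ℝ k).eval (a + 1) := by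
  have h1 := ascPochhammer_succ_eval k a
  have h2 : (ascPochhammer ℝ (k + 1)).eval a = a * (ascPochhammer ℝ k).eval (a + 1) := by
    rw [ascPochhammer_succ_left]
    simp [Polynomial.eval_comp]
  rw [← h1, h2]

lemma poch_nat (N k : ℕ) (hN : 0 < N) :
    (ascPochhammer ℝ k).eval (N : ℝ) = (k.factorial : ℝ) * ((N - 1 + k).choose k : ℝ) := by
  rw [← ascPochhammer_eval_cast, ascPochhammer_nat_eq_ascFactorial]
  obtain ⟨m, rfl⟩ := Nat.exists_eq_add_of_lt hN
  push_cast [Nat.ascFactorial_eq_factorial_mul_choose]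
  ring

-- each hypergeometric series term in simplified form
lemma hterm_eq (α : ℝ) (hα : 2 < α) (N : ℕ) (hN : 0 < N) (z : ℝ) (k : ℕ) :
    ((ascPochhammer ℝ k).eval (-2 / α) * (ascPochhammer ℝ k).eval (N : ℝ) /
        (ascPochhammer ℝ k).eval (1 - 2 / α)) * z ^ k / (Nat.factorial k)
      = ((-2 / α) / ((-2 / α) + k)) * ((N - 1 + k).choose k : ℝ) * z ^ k := by
  have hα0 : (0:ℝ) < α := by linarith
  have ha1 : (0:ℝ) < -2 / α + 1 := by
    rw [neg_div, neg_add_eq_sub, sub_pos, div_lt_one hα0]; linarith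
  have hc : (1 : ℝ) - 2 / α = (-2 / α) + 1 := by ring
  have hpc : (0:ℝ) < (ascPochhammer ℝ k).eval (-2 / α + 1) :=
    ascPochhammer_pos k _ ha1
  have hak : (-2 / α) + (k:ℝ) ≠ 0 := by
    rcases Nat.eq_zero_or_pos k with rfl | hk
    · simp only [Nat.cast_zero, add_zero]
      rw [neg_div]
      exact neg_ne_zero.mpr (div_ne_zero two_ne_zero (ne_of_gt hα0))
    · have : (1:ℝ) ≤ (k:ℝ) := by exact_mod_cast hk
      have h2 : 2 / α < 1 := (div_lt_one hα0).mpr (by linarith)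
      have : (0:ℝ) < -2 / α + k := by rw [neg_div]; linarith
      linarith
  rw [hc, poch_nat N k hN]
  have hratio : (ascPochhammer ℝ k).eval (-2 / α)
      = (-2 / α) * (ascPochhammer ℝ k).eval (-2 / α + 1) / ((-2 / α) + k) :=
    (eq_div_iff hak).mpr (poch_shift (-2 / α) k)
  rw [hratio]
  have hfac : (k.factorial : ℝ) ≠ 0 := Nat.cast_ne_zero.mpr k.factorial_ne_zero
  have key : ∀ a P fac C zk e : ℝ, P ≠ 0 → fac ≠ 0 → e ≠ 0 →
      ((a * P / e) * (fac * C) / P) * zk / fac = a / e * C * zk := by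
    intros a P fac C zk e hP hf he
    field_simp
  exact key _ _ _ _ _ _ hpc.ne' hfac hak

lemma binom_hasSum (N : ℕ) (hN : 0 < N) (x : ℝ) (hx0 : 0 < x) (hx1 : x < 1) :
    HasSum (fun n : ℕ => ((n + (N - 1)).choose (N - 1) : ℝ) * (-x) ^ n)
      ((1 + x) ^ (-(N : ℝ))) := by
  have hr : ‖-x‖ < 1 := by rwa [norm_neg, Real.norm_of_nonneg hx0.le]
  have h := hasSum_choose_mul_geometric_of_norm_lt_one (N - 1) hr
  have h1 : (1 : ℝ) - -x = 1 + x := by ring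
  have h2 : N - 1 + 1 = N := Nat.succ_pred_eq_of_pos hN
  rw [h1, h2] at h
  have hpos : (0:ℝ) < 1 + x := by linarith
  have : (1 + x) ^ (-(N : ℝ)) = 1 / (1 + x) ^ N := by
    rw [Real.rpow_neg hpos.le, Real.rpow_natCast, one_div]
  rwa [this]

/-- For `α > 2`, a positive integer `N`, `A > 0` and `0 < s̃ < A^α`,
`∫_A^∞ (1 − (1 + s̃·y^{−α})^{−N})·y dy = (A²/2)·(₂F₁(−2/α, N; 1 − 2/α; −s̃·A^{−α}) − 1)`. -/
theorem interference_integral_closed_form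
    (α : ℝ) (hα : 2 < α) (N : ℕ) (hN : 0 < N) (A : ℝ) (hA : 0 < A)
    (st : ℝ) (hst0 : 0 < st) (hst : st < A ^ α) :
    ∫ y in Set.Ioi A, (1 - (1 + st * y ^ (-α)) ^ (-(N : ℝ))) * y
      = (A ^ 2 / 2) *
          (gaussHyper (-2 / α) (N : ℝ) (1 - 2 / α) (-(st * A ^ (-α))) - 1) := by
  have hα0 : (0:ℝ) < α := by linarith
  have hApow : (0:ℝ) < A ^ (-α) := Real.rpow_pos_of_pos hA _
  set r : ℝ := st * A ^ (-α) with hr_def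
  have hr0 : 0 < r := mul_pos hst0 hApow
  have hr1 : r < 1 := by
    rw [hr_def, Real.rpow_neg hA.le, ← div_eq_mul_inv,
      div_lt_one (Real.rpow_pos_of_pos hA α)]
    exact hst
  -- series data
  set p : ℕ → ℝ := fun n => 1 - α * ((n:ℝ) + 1) with hp_def
  set d : ℕ → ℝ := fun n => -(((n + 1) + (N - 1)).choose (N - 1) : ℝ) * (-st) ^ (n + 1)
    with hd_def
  set f : ℕ → ℝ → ℝ := fun n y => d n * y ^ (p n) with hf_def
  have hn1 : ∀ n : ℕ, (1:ℝ) ≤ (n:ℝ) + 1 := fun n => le_add_of_nonneg_left n.cast_nonneg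
  have hD : ∀ n : ℕ, (0:ℝ) < α * ((n:ℝ) + 1) - 2 := by
    intro n
    have := le_mul_of_one_le_right hα0.le (hn1 n)
    linarith
  have hp : ∀ n, p n < -1 := by
    intro n
    have := hD n
    simp only [hp_def]
    linarith
  have hInt : ∀ n : ℕ, IntegrableOn (f n) (Set.Ioi A) := fun n =>
    (integrableOn_Ioi_rpow_of_lt (hp n) hA).const_mul (d n)
  -- value of each integral
  have hIval : ∀ n : ℕ, ∫ y in Set.Ioi A, y ^ (p n)
      = A ^ (p n + 1) / (α * ((n:ℝ) + 1) - 2) := by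
    intro n
    rw [integral_Ioi_rpow_of_lt (hp n) hA]
    have h1 : α * ((n:ℝ) + 1) - 2 = -(p n + 1) := by simp only [hp_def]; ring
    rw [h1, div_neg, neg_div]
  -- rpow algebra
  have hApq : ∀ n : ℕ, A ^ (p n + 1) = A ^ 2 * (A ^ (-α)) ^ (n + 1) := by
    intro n
    have h1 : p n + 1 = (2:ℝ) + (-α) * (((n+1 : ℕ)):ℝ) := by
      simp only [hp_def]; push_cast; ring
    rw [h1, Real.rpow_add hA, ← Real.rpow_natCast A 2, ← Real.rpow_natCast (A ^ (-α)) (n+1),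
      ← Real.rpow_mul hA.le]
    norm_num
  have habs_d : ∀ n : ℕ, |d n| = (((n + 1) + (N - 1)).choose (N - 1) : ℝ) * st ^ (n + 1) := by
    intro n
    simp only [hd_def]
    rw [abs_mul, abs_neg, abs_pow, abs_neg, abs_of_pos hst0,
      abs_of_nonneg (Nat.cast_nonneg _)]
  -- norm integrals
  have hNormInt : ∀ n : ℕ, ∫ y in Set.Ioi A, ‖f n y‖
      = |d n| * (A ^ (p n + 1) / (α * ((n:ℝ) + 1) - 2)) := by
    intro n
    have hcong : Set.EqOn (fun y => ‖f n y‖) (fun y => |d n| * y ^ (p n)) (Set.Ioi A) := by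
      intro y hy
      have hy0 : 0 < y := lt_trans hA hy
      simp only [hf_def, Real.norm_eq_abs, abs_mul,
        abs_of_pos (Real.rpow_pos_of_pos hy0 (p n))]
    rw [setIntegral_congr_fun measurableSet_Ioi hcong, integral_const_mul, hIval n]
  -- summability of the norm integrals
  have hchoose_sum : Summable (fun n : ℕ => (((n+1) + (N - 1)).choose (N - 1) : ℝ) * r ^ (n+1)) := by
    have hrn : ‖r‖ < 1 := by rwa [Real.norm_of_nonneg hr0.le]
    have h0 : Summable (fun m : ℕ => ((m + (N - 1)).choose (N - 1) : ℝ) * r ^ m) :=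
      summable_choose_mul_geometric_of_norm_lt_one (N - 1) hrn
    exact (summable_nat_add_iff 1).mpr h0
  have hsum_norm : Summable (fun n : ℕ => ∫ y in Set.Ioi A, ‖f n y‖) := by
    have hbound : ∀ n : ℕ, ∫ y in Set.Ioi A, ‖f n y‖
        ≤ A ^ 2 / (α - 2) * ((((n+1) + (N - 1)).choose (N - 1) : ℝ) * r ^ (n+1)) := by
      intro n
      rw [hNormInt n, habs_d n, hApq n]
      have hrr : st ^ (n+1) * (A ^ (-α)) ^ (n+1) = r ^ (n+1) := by
        rw [hr_def, mul_pow]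
      have key : (((n + 1) + (N - 1)).choose (N - 1) : ℝ) * st ^ (n + 1) *
            (A ^ 2 * (A ^ (-α)) ^ (n + 1) / (α * ((n:ℝ) + 1) - 2))
          = A ^ 2 * ((((n+1) + (N - 1)).choose (N - 1) : ℝ) * r ^ (n+1)) / (α * ((n:ℝ) + 1) - 2) := by
        rw [← hrr]; ring
      rw [key, div_mul_eq_mul_div]
      have h1 : α - 2 ≤ α * ((n:ℝ) + 1) - 2 := by
        have := le_mul_of_one_le_right hα0.le (hn1 n)
        linarith
      gcongr
    exact Summable.of_nonneg_of_le
      (fun n => integral_nonneg fun y => norm_nonneg _) hbound (hchoose_sum.mul_left _)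
  -- swap integral and sum
  have hswap := integral_tsum_of_summable_integral_norm
    (μ := volume.restrict (Set.Ioi A)) hInt hsum_norm
  -- pointwise series expansion of the integrand
  have hpt : Set.EqOn (fun y => (1 - (1 + st * y ^ (-α)) ^ (-(N : ℝ))) * y)
      (fun y => ∑' n, f n y) (Set.Ioi A) := by
    intro y hy
    have hy0 : 0 < y := lt_trans hA hy
    dsimp only
    set x : ℝ := st * y ^ (-α) with hx_def
    have hx0 : 0 < x := mul_pos hst0 (Real.rpow_pos_of_pos hy0 _)
    have hx1 : x < 1 := by
      have hlt : y ^ (-α) < A ^ (-α) := Real.rpow_lt_rpow_of_neg hA hy (by linarith)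
      have hxr : x < r := by
        rw [hx_def, hr_def]
        exact (mul_lt_mul_iff_right₀ hst0).mpr hlt
      linarith
    have hbs := binom_hasSum N hN x hx0 hx1
    have hsum := hbs.summable
    have htail : ∑' n : ℕ, ((n + 1 + (N - 1)).choose (N - 1) : ℝ) * (-x) ^ (n + 1)
        = (1 + x) ^ (-(N : ℝ)) - 1 := by
      have h := Summable.tsum_eq_zero_add hsum
      rw [hbs.tsum_eq] at h
      have h0 : ((0 + (N - 1)).choose (N - 1) : ℝ) * (-x) ^ 0 = 1 := by simp
      rw [h0] at h
      linarith
    have hterm : ∀ n : ℕ, f n y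
        = -(((n + 1 + (N - 1)).choose (N - 1) : ℝ) * (-x) ^ (n + 1)) * y := by
      intro n
      have hnegx : -x = -st * y ^ (-α) := by rw [hx_def]; ring
      have hxy : (-x) ^ (n + 1) = (-st) ^ (n + 1) * y ^ (-α * (((n:ℝ)) + 1)) := by
        rw [hnegx, mul_pow, ← Real.rpow_natCast (y ^ (-α)) (n + 1),
          ← Real.rpow_mul hy0.le]
        push_cast
        ring_nf
      have hyp : y ^ (p n) = y ^ (-α * ((n:ℝ) + 1)) * y := by
        rw [show p n = -α * ((n:ℝ) + 1) + 1 by simp only [hp_def]; ring,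
          Real.rpow_add hy0, Real.rpow_one]
      simp only [hf_def, hd_def]
      rw [hxy, hyp]
      ring
    calc (1 - (1 + x) ^ (-(N : ℝ))) * y
        = (-((1 + x) ^ (-(N : ℝ)) - 1)) * y := by ring
      _ = (-(∑' n : ℕ, ((n + 1 + (N - 1)).choose (N - 1) : ℝ) * (-x) ^ (n + 1))) * y := by
          rw [htail]
      _ = ∑' n : ℕ, (-(((n + 1 + (N - 1)).choose (N - 1) : ℝ) * (-x) ^ (n + 1)) * y) := by
          rw [← tsum_neg, tsum_mul_right]
      _ = ∑' n, f n y := tsum_congr fun n => (hterm n).symm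
  rw [setIntegral_congr_fun measurableSet_Ioi hpt, ← hswap]
  -- the hypergeometric series in simplified form
  set G : ℕ → ℝ := fun k =>
    ((-2 / α) / ((-2 / α) + (k:ℝ))) * ((N - 1 + k).choose k : ℝ) * (-r) ^ k with hG_def
  have hG' : gaussHyper (-2 / α) (N : ℝ) (1 - 2 / α) (-r) = ∑' k, G k := by
    unfold gaussHyper
    exact tsum_congr fun k => hterm_eq α hα N hN (-r) k
  have ha1 : (0:ℝ) < -2 / α + 1 := by
    have h2 : 2 / α < 1 := (div_lt_one hα0).mpr (by linarith)
    rw [neg_div]; linarith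
  have hCC : ∀ m : ℕ, ((N - 1 + m).choose m : ℕ) = (m + (N - 1)).choose (N - 1) := by
    intro m
    rw [Nat.add_comm]
    exact Nat.choose_symm_add
  have hGs : Summable (fun n : ℕ => G (n + 1)) := by
    set M : ℝ := (2 / α) / (-2 / α + 1) with hM_def
    have hM0 : 0 ≤ M := by positivity
    refine Summable.of_norm_bounded (g := fun n : ℕ => M * ((((n+1) + (N - 1)).choose (N - 1) : ℝ) * r ^ (n+1)))
      (hchoose_sum.mul_left _) (fun n => ?_)
    have hden : (0:ℝ) < -2 / α + ((n:ℝ) + 1) := by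
      have := hn1 n
      linarith
    have hden' : -2 / α + 1 ≤ -2 / α + ((n:ℝ) + 1) := by
      have := hn1 n
      linarith
    have hGn : G (n+1) = ((-2 / α) / (-2 / α + ((n:ℝ)+1)))
        * ((((n+1) + (N - 1)).choose (N - 1)) : ℝ) * (-r) ^ (n+1) := by
      simp only [hG_def, hCC (n+1)]
      push_cast
      ring
    have hCpos : (0:ℝ) ≤ ((((n+1) + (N - 1)).choose (N - 1)) : ℝ) := Nat.cast_nonneg _
    have habs2 : |(-2 : ℝ) / α| = 2 / α := by
      rw [abs_div, abs_neg, abs_of_pos hα0]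
      norm_num
    rw [Real.norm_eq_abs, hGn, abs_mul, abs_mul, abs_pow, abs_neg, abs_of_pos hr0,
      abs_div, habs2, abs_of_pos hden, abs_of_nonneg hCpos]
    have hMle : 2 / α / (-2 / α + ((n:ℝ) + 1)) ≤ M := by
      rw [hM_def]
      gcongr
    calc 2 / α / (-2 / α + ((n:ℝ) + 1)) * ((((n+1) + (N - 1)).choose (N - 1)) : ℝ) * r ^ (n + 1)
        = 2 / α / (-2 / α + ((n:ℝ) + 1)) * (((((n+1) + (N - 1)).choose (N - 1)) : ℝ) * r ^ (n + 1)) := by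
          ring
      _ ≤ M * (((((n+1) + (N - 1)).choose (N - 1)) : ℝ) * r ^ (n + 1)) := by
          apply mul_le_mul_of_nonneg_right hMle
          positivity
  have hGsum : Summable G := (summable_nat_add_iff 1).mp hGs
  have hG0 : G 0 = 1 := by
    have hne : (-2 : ℝ) / α ≠ 0 := by
      rw [neg_div]
      exact neg_ne_zero.mpr (div_ne_zero two_ne_zero hα0.ne')
    simp [hG_def, div_self hne]
  have hRHS : (A ^ 2 / 2) * (gaussHyper (-2 / α) (N : ℝ) (1 - 2 / α) (-r) - 1)
      = ∑' n : ℕ, (A ^ 2 / 2) * G (n + 1) := by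
    rw [hG', Summable.tsum_eq_zero_add hGsum, hG0, tsum_mul_left]
    ring
  rw [hRHS]
  -- termwise identification
  refine tsum_congr fun n => ?_
  have hC : ((N - 1 + (n+1)).choose (n+1) : ℝ) = (((n+1) + (N - 1)).choose (N - 1) : ℝ) := by
    exact Nat.cast_inj.mpr (hCC (n+1))
  have hnegr : (-r) ^ (n+1) = (-st) ^ (n+1) * (A ^ (-α)) ^ (n+1) := by
    rw [hr_def, ← mul_pow]
    ring_nf
  have hfrac : (-2 / α) / ((-2 / α) + (((n:ℝ)) + 1)) = -2 / (α * ((n:ℝ) + 1) - 2) := by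
    rw [div_eq_div_iff (by have := hn1 n; have := ha1; linarith) (hD n).ne']
    field_simp
    ring
  calc ∫ y in Set.Ioi A, f n y
      = d n * (A ^ (p n + 1) / (α * ((n:ℝ) + 1) - 2)) := by
        simp only [hf_def]
        rw [integral_const_mul, hIval n]
    _ = (A ^ 2 / 2) * G (n + 1) := by
        simp only [hG_def, hd_def]
        push_cast
        rw [hApq n, hC, hnegr]
        rw [show ((-2:ℝ) / α) / ((-2) / α + ((n:ℝ) + 1)) = -2 / (α * ((n:ℝ) + 1) - 2) from hfrac]
        have hDne : (-2:ℝ) + α + α * (n:ℝ) ≠ 0 := by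
          have := hD n
          intro h
          apply (hD n).ne'
          linarith
        field_simp [hDne]
end
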